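/- Let M be a nonnegative irreducible real n×n matrix with n ≥ 1 and let B be a complex n×n matrix such that |B_{ij}| ≤ M_{ij} for all indices i, j, and suppose ρ(B) = ρ(M). If x ∈ ℂ^n is nonzero and B·x = λ·x for a complex number λ with |λ| = ρ(M), then the real vector |x| (with coordinates |x_i|) satisfies M·|x| = ρ(M)·|x|. -/

import Mathlib

open Matrix Polynomial

/-- The spectral radius of a complex square matrix: the maximum modulus of the roots
of its characteristic polynomial. -/
noncomputable def specRadC {n : ℕ} (B : Matrix (Fin n) (Fin n) ℂ) : ℝ :=
  sSup {r : ℝ | ∃ μ : ℂ, μ ∈ B.charpoly.roots ∧ ‖μ‖ = r}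

/-- The spectral radius of a real square matrix: the spectral radius of the matrix
regarded as a complex matrix. -/
noncomputable def specRad {n : ℕ} (A : Matrix (Fin n) (Fin n) ℝ) : ℝ :=
  specRadC (A.map (Complex.ofReal : ℝ → ℂ))

open Filter
open scoped ENNReal NNReal

lemma pow_entry_nonneg {n : ℕ} (M : Matrix (Fin n) (Fin n) ℝ) (hM : ∀ i j, 0 ≤ M i j)
    (k : ℕ) (i j : Fin n) : 0 ≤ (M ^ k) i j := by
  induction k generalizing i j with
  | zero => by_cases hij : i = j <;> simp [hij, Matrix.one_apply]
  | succ k ih =>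
    rw [pow_succ, Matrix.mul_apply]
    exact Finset.sum_nonneg fun l _ => mul_nonneg (ih i l) (hM l j)


lemma charpoly_eval_eq_det {n : ℕ} (A : Matrix (Fin n) (Fin n) ℂ) (μ : ℂ) :
    A.charpoly.eval μ = (Matrix.diagonal (fun _ => μ) - A).det := by
  rw [Matrix.charpoly, ← Polynomial.coe_evalRingHom, RingHom.map_det]
  congr 1
  ext i j
  by_cases h : i = j <;>
    simp [h, charmatrix_apply, Matrix.diagonal, Matrix.sub_apply]

lemma mem_roots_of_mem_spectrum {n : ℕ} (A : Matrix (Fin n) (Fin n) ℂ) (μ : ℂ)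
    (h : μ ∈ spectrum ℂ A) : μ ∈ A.charpoly.roots := by
  rw [mem_roots (A.charpoly_monic.ne_zero)]
  rw [spectrum.mem_iff] at h
  rw [IsRoot, charpoly_eval_eq_det]
  by_contra hd
  apply h
  have := (Matrix.isUnit_iff_isUnit_det _).mpr (isUnit_iff_ne_zero.mpr hd)
  rw [Matrix.algebraMap_eq_diagonal]; simpa [Pi.algebraMap_def] using this

lemma bddAbove_rootsAbs {n : ℕ} (A : Matrix (Fin n) (Fin n) ℂ) :
    BddAbove {r : ℝ | ∃ μ : ℂ, μ ∈ A.charpoly.roots ∧ ‖μ‖ = r} := by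
  have : {r : ℝ | ∃ μ : ℂ, μ ∈ A.charpoly.roots ∧ ‖μ‖ = r}
      = (fun μ : ℂ => ‖μ‖) '' (A.charpoly.roots.toFinset : Set ℂ) := by
    ext r
    simp [Multiset.mem_toFinset, eq_comm, and_comm]
  rw [this]
  exact (Set.Finite.image _ (A.charpoly.roots.toFinset.finite_toSet)).bddAbove

attribute [local instance] Matrix.linftyOpNormedAddCommGroup Matrix.linftyOpNormedRing
  Matrix.linftyOpNormedAlgebra

lemma le_specRad_of_subinvariant {n : ℕ} (hn : 1 ≤ n) (M : Matrix (Fin n) (Fin n) ℝ)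
    (hM : ∀ i j, 0 ≤ M i j) (z : Fin n → ℝ) (hz : ∀ i, 0 < z i) (c : ℝ) (hc : 0 < c)
    (h : ∀ i, c * z i ≤ M.mulVec z i) : c ≤ specRad M := by
  haveI : Nonempty (Fin n) := ⟨⟨0, hn⟩⟩
  -- entries of powers are nonneg
  have hMk : ∀ (k : ℕ) (i j : Fin n), 0 ≤ (M ^ k) i j := by
    intro k
    induction k with
    | zero => intro i j; by_cases hij : i = j <;> simp [hij, Matrix.one_apply]
    | succ k ih =>
      intro i j
      rw [pow_succ, Matrix.mul_apply]
      exact Finset.sum_nonneg fun l _ => mul_nonneg (ih i l) (hM l j)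
  -- subinvariance for powers
  have hk : ∀ (k : ℕ) (i : Fin n), c ^ k * z i ≤ ((M ^ k).mulVec z) i := by
    intro k
    induction k with
    | zero => intro i; simp [Matrix.one_mulVec]
    | succ k ih =>
      intro i
      have : (M ^ (k + 1)).mulVec z = M.mulVec ((M ^ k).mulVec z) := by
        rw [Matrix.mulVec_mulVec, ← pow_succ']
      rw [this]
      have h1 : ∀ j, c ^ k * z j ≤ ((M ^ k).mulVec z) j := ih
      have h2 : M.mulVec (fun j => c ^ k * z j) i ≤ M.mulVec ((M ^ k).mulVec z) i := by
        simp only [Matrix.mulVec, dotProduct]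
        exact Finset.sum_le_sum fun j _ => mul_le_mul_of_nonneg_left (h1 j) (hM i j)
      have h3 : M.mulVec (fun j => c ^ k * z j) i = c ^ k * M.mulVec z i := by
        simp only [Matrix.mulVec, dotProduct, Finset.mul_sum]
        exact Finset.sum_congr rfl fun j _ => by ring
      calc c ^ (k + 1) * z i = c ^ k * (c * z i) := by ring
        _ ≤ c ^ k * M.mulVec z i := by
            exact mul_le_mul_of_nonneg_left (h i) (pow_nonneg hc.le k)
        _ = M.mulVec (fun j => c ^ k * z j) i := h3.symm
        _ ≤ _ := h2
  set A := M.map (Complex.ofReal : ℝ → ℂ) with hA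
  have hApow : ∀ k : ℕ, A ^ k = (M ^ k).map (Complex.ofReal : ℝ → ℂ) := by
    intro k
    have e : ∀ (N : Matrix (Fin n) (Fin n) ℝ),
        N.map (Complex.ofReal : ℝ → ℂ) = Complex.ofRealHom.mapMatrix N := fun _ => rfl
    rw [hA, e, e, ← map_pow]
  obtain ⟨i0⟩ := (inferInstance : Nonempty (Fin n))
  set zmax := Finset.univ.sup' Finset.univ_nonempty z with hzmax
  set zmin := Finset.univ.inf' Finset.univ_nonempty z with hzmin
  have hzmaxpos : 0 < zmax := lt_of_lt_of_le (hz i0) (Finset.le_sup' z (Finset.mem_univ i0))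
  have hzminpos : 0 < zmin := by
    rw [hzmin, Finset.lt_inf'_iff]
    exact fun i _ => hz i
  set α := zmin / zmax with hα
  have hαpos : 0 < α := div_pos hzminpos hzmaxpos
  -- row sums bound
  have hrow : ∀ (k : ℕ) (i : Fin n), α * c ^ k ≤ ∑ j, (M ^ k) i j := by
    intro k i
    have h1 : c ^ k * z i ≤ ∑ j, (M ^ k) i j * z j := hk k i
    have h2 : ∑ j, (M ^ k) i j * z j ≤ (∑ j, (M ^ k) i j) * zmax := by
      rw [Finset.sum_mul]
      exact Finset.sum_le_sum fun j _ =>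
        mul_le_mul_of_nonneg_left (Finset.le_sup' z (Finset.mem_univ j)) (hMk k i j)
    have h3 : c ^ k * zmin ≤ c ^ k * z i :=
      mul_le_mul_of_nonneg_left (Finset.inf'_le z (Finset.mem_univ i)) (pow_nonneg hc.le k)
    rw [hα, div_mul_eq_mul_div, div_le_iff₀ hzmaxpos]
    calc zmin * c ^ k = c ^ k * zmin := by ring
      _ ≤ (∑ j, (M ^ k) i j) * zmax := le_trans h3 (le_trans h1 h2)
  -- norm lower bound
  have hnorm : ∀ k : ℕ, ENNReal.ofReal (α * c ^ k) ≤ ((‖A ^ k‖₊ : ℝ≥0∞)) := by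
    intro k
    have row_le : ∑ j, ‖(A ^ k) i0 j‖ ≤ ‖A ^ k‖ := by
      have hle := Finset.le_sup (f := fun i => ∑ j, ‖(A ^ k) i j‖₊) (Finset.mem_univ i0)
      rw [← Matrix.linfty_opNNNorm_def] at hle
      calc ∑ j, ‖(A ^ k) i0 j‖ = ((∑ j, ‖(A ^ k) i0 j‖₊ : NNReal) : ℝ) := by
            push_cast; rfl
        _ ≤ ‖A ^ k‖ := by exact_mod_cast hle
    have hentry : ∀ j, ‖(A ^ k) i0 j‖ = (M ^ k) i0 j := by
      intro j
      rw [hApow k]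
      simp [Matrix.map_apply, Complex.norm_real, abs_of_nonneg (hMk k i0 j)]
    have : α * c ^ k ≤ ‖A ^ k‖ := by
      refine le_trans (hrow k i0) (le_trans (le_of_eq ?_) row_le)
      exact (Finset.sum_congr rfl fun j _ => (hentry j).symm)
    calc ENNReal.ofReal (α * c ^ k) ≤ ENNReal.ofReal (‖A ^ k‖) := ENNReal.ofReal_le_ofReal this
      _ = (‖A ^ k‖₊ : ℝ≥0∞) := ofReal_norm _
  -- spectral radius bounded by specRad M
  have hR : spectralRadius ℂ A ≤ ENNReal.ofReal (specRad M) := by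
    rw [spectralRadius]
    refine iSup₂_le fun μ hμ => ?_
    have hroot := mem_roots_of_mem_spectrum A μ hμ
    have habs : ‖μ‖ ≤ specRad M :=
      le_csSup (bddAbove_rootsAbs A) ⟨μ, hroot, rfl⟩
    calc (‖μ‖₊ : ℝ≥0∞) = ENNReal.ofReal (‖μ‖) := by
          exact (ofReal_norm μ).symm
      _ ≤ _ := ENNReal.ofReal_le_ofReal habs
  have T := spectrum.pow_nnnorm_pow_one_div_tendsto_nhds_spectralRadius A
  -- any 0 < c' < c is ≤ specRad M
  have key : ∀ c' : ℝ, 0 < c' → c' < c → c' ≤ specRad M := by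
    intro c' hc'0 hc'c
    have hsr : ENNReal.ofReal c' ≤ spectralRadius ℂ A := by
      refine ge_of_tendsto T ?_
      have hr : 1 < c / c' := (one_lt_div hc'0).mpr hc'c
      have hten := tendsto_pow_atTop_atTop_of_one_lt hr
      filter_upwards [hten.eventually_ge_atTop α⁻¹, Filter.eventually_ge_atTop 1]
        with k hk1 hk2
      have hkne : (k : ℝ) ≠ 0 := by positivity
      have h1 : c' ^ k ≤ α * c ^ k := by
        have : α⁻¹ * c' ^ k ≤ (c / c') ^ k * c' ^ k :=
          mul_le_mul_of_nonneg_right hk1 (pow_nonneg hc'0.le k)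
        rw [div_pow, div_mul_cancel₀] at this
        · calc c' ^ k = α * (α⁻¹ * c' ^ k) := by field_simp
            _ ≤ α * c ^ k := mul_le_mul_of_nonneg_left this hαpos.le
        · positivity
      have h2 : ENNReal.ofReal (c' ^ k) ≤ ((‖A ^ k‖₊ : ℝ≥0∞)) :=
        le_trans (ENNReal.ofReal_le_ofReal h1) (hnorm k)
      have h3 : (ENNReal.ofReal (c' ^ k)) ^ (1 / (k : ℝ)) = ENNReal.ofReal c' := by
        rw [ENNReal.ofReal_pow hc'0.le, ← ENNReal.rpow_natCast, ← ENNReal.rpow_mul,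
          mul_one_div_cancel hkne, ENNReal.rpow_one]
      calc ENNReal.ofReal c' = (ENNReal.ofReal (c' ^ k)) ^ (1 / (k : ℝ)) := h3.symm
        _ ≤ (‖A ^ k‖₊ : ℝ≥0∞) ^ (1 / (k : ℝ)) :=
            ENNReal.rpow_le_rpow h2 (by positivity)
    have := le_trans hsr hR
    have hRpos : 0 < specRad M := by
      by_contra hneg
      push_neg at hneg
      rw [ENNReal.ofReal_eq_zero.mpr hneg] at this
      simp only [nonpos_iff_eq_zero, ENNReal.ofReal_eq_zero] at this
      linarith
    exact (ENNReal.ofReal_le_ofReal_iff hRpos.le).mp this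
  by_contra hlt
  push_neg at hlt
  set c' := (max (specRad M) 0 + c) / 2 with hc'
  have h1 : 0 < c' := by positivity
  have h2 : c' < c := by
    have : max (specRad M) 0 < c := max_lt hlt hc
    rw [hc']; linarith
  have h3 : specRad M < c' := by
    have : specRad M ≤ max (specRad M) 0 := le_max_left _ _
    have h4 : specRad M < c := hlt
    rw [hc']; linarith [le_max_left (specRad M) 0]
  linarith [key c' h1 h2]


theorem abs_eigenvector_of_specRad_eq {n : ℕ} (hn : 1 ≤ n)
    (M : Matrix (Fin n) (Fin n) ℝ)
    (hM : ∀ i j, 0 ≤ M i j)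
    (hirr : ∀ i j, ∃ k : ℕ, 1 ≤ k ∧ 0 < (M ^ k) i j)
    (B : Matrix (Fin n) (Fin n) ℂ)
    (hB : ∀ i j, ‖B i j‖ ≤ M i j)
    (heq : specRadC B = specRad M)
    (x : Fin n → ℂ) (hx : x ≠ 0) (lam : ℂ)
    (hBx : B.mulVec x = lam • x) (hlam : ‖lam‖ = specRad M) :
    M.mulVec (fun i => ‖x i‖) = specRad M • fun i => ‖x i‖ := by
  haveI : Nonempty (Fin n) := ⟨⟨0, hn⟩⟩
  set ρ := specRad M with hρ
  set v : Fin n → ℝ := fun i => ‖x i‖ with hv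
  have hρ0 : 0 ≤ ρ := hlam ▸ norm_nonneg lam
  have hv0 : ∀ i, 0 ≤ v i := fun i => norm_nonneg _
  have hsub : ∀ i, ρ * v i ≤ M.mulVec v i := by
    intro i
    have h1 : ‖(B.mulVec x) i‖ = ρ * v i := by
      rw [hBx]
      simp only [Pi.smul_apply, smul_eq_mul]
      rw [norm_mul, hlam]
    rw [← h1]
    have h2 : ‖B.mulVec x i‖ ≤ ∑ j, ‖B i j‖ * ‖x j‖ := by
      simp only [Matrix.mulVec, dotProduct]
      refine le_trans (norm_sum_le _ _) (le_of_eq ?_)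
      exact Finset.sum_congr rfl fun j _ => norm_mul _ _
    refine le_trans h2 ?_
    simp only [Matrix.mulVec, dotProduct]
    exact Finset.sum_le_sum fun j _ =>
      mul_le_mul_of_nonneg_right (hB i j) (norm_nonneg _)
  set w : Fin n → ℝ := M.mulVec v - ρ • v with hw
  have hwapp : ∀ i, w i = M.mulVec v i - ρ * v i := fun i => rfl
  have hw0 : ∀ i, 0 ≤ w i := fun i => by rw [hwapp]; linarith [hsub i]
  by_contra hne
  have hwne : w ≠ 0 := by
    intro h0
    exact hne (sub_eq_zero.mp h0)
  obtain ⟨jw, hjw⟩ : ∃ j, 0 < w j := by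
    by_contra hno; push_neg at hno
    exact hwne (funext fun j => le_antisymm (hno j) (hw0 j))
  obtain ⟨jv, hjv⟩ : ∃ j, 0 < v j := by
    obtain ⟨j, hj⟩ := Function.ne_iff.mp hx
    exact ⟨j, norm_pos_iff.mpr hj⟩
  choose K hK1 hKpos using hirr
  set N := Finset.univ.sup (fun i => max (K i jv) (K i jw)) with hN
  have hKv : ∀ i, K i jv ≤ N := fun i => le_trans (le_max_left _ _)
    (Finset.le_sup (f := fun i => max (K i jv) (K i jw)) (Finset.mem_univ i))
  have hKw : ∀ i, K i jw ≤ N := fun i => le_trans (le_max_right _ _)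
    (Finset.le_sup (f := fun i => max (K i jv) (K i jw)) (Finset.mem_univ i))
  set P := ∑ m ∈ Finset.range (N + 1), M ^ m with hP
  have hPapp : ∀ (u : Fin n → ℝ) (i : Fin n),
      P.mulVec u i = ∑ m ∈ Finset.range (N + 1), (M ^ m).mulVec u i := by
    intro u i
    simp only [hP, Matrix.mulVec, dotProduct, Matrix.sum_apply, Finset.sum_mul]
    rw [Finset.sum_comm]
  have hPpos : ∀ (u : Fin n → ℝ), (∀ i, 0 ≤ u i) → ∀ (j : Fin n), 0 < u j →
      (∀ i, K i j ≤ N) → ∀ i, 0 < P.mulVec u i := by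
    intro u hu j hj hKle i
    rw [hPapp]
    have hmv : ∀ m, 0 ≤ (M ^ m).mulVec u i := by
      intro m
      simp only [Matrix.mulVec, dotProduct]
      exact Finset.sum_nonneg fun l _ => mul_nonneg (pow_entry_nonneg M hM m i l) (hu l)
    refine Finset.sum_pos' (fun m _ => hmv m) ⟨K i j,
      Finset.mem_range.mpr (Nat.lt_succ_of_le (hKle i)), ?_⟩
    simp only [Matrix.mulVec, dotProduct]
    refine Finset.sum_pos' (fun l _ => mul_nonneg (pow_entry_nonneg M hM _ i l) (hu l))
      ⟨j, Finset.mem_univ j, mul_pos (hKpos i j) hj⟩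
  set z := P.mulVec v with hz
  set y := P.mulVec w with hy
  have hzpos : ∀ i, 0 < z i := hPpos v hv0 jv hjv hKv
  have hypos : ∀ i, 0 < y i := hPpos w hw0 jw hjw hKw
  have hcomm : M * P = P * M := by
    simp only [hP, Finset.mul_sum, Finset.sum_mul]
    exact Finset.sum_congr rfl fun m _ => (Commute.pow_right (Commute.refl M) m).eq
  have hMv : M.mulVec v = ρ • v + w := by
    rw [hw, add_sub_cancel]
  have hMz : M.mulVec z = ρ • z + y := by
    calc M.mulVec (P.mulVec v) = (M * P).mulVec v := Matrix.mulVec_mulVec v M P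
      _ = (P * M).mulVec v := by rw [hcomm]
      _ = P.mulVec (M.mulVec v) := (Matrix.mulVec_mulVec v P M).symm
      _ = P.mulVec (ρ • v + w) := by rw [hMv]
      _ = ρ • P.mulVec v + P.mulVec w := by rw [Matrix.mulVec_add, Matrix.mulVec_smul]
  set ε := Finset.univ.inf' Finset.univ_nonempty (fun i => y i / z i) with hε
  have hεpos : 0 < ε := by
    rw [hε, Finset.lt_inf'_iff]
    exact fun i _ => div_pos (hypos i) (hzpos i)
  have hεle : ∀ i, ε * z i ≤ y i := by
    intro i
    have h := Finset.inf'_le (fun i => y i / z i) (Finset.mem_univ i)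
    exact (le_div_iff₀ (hzpos i)).mp h
  have hsub2 : ∀ i, (ρ + ε) * z i ≤ M.mulVec z i := by
    intro i
    have : M.mulVec z i = ρ * z i + y i := by
      rw [hMz]; simp [Pi.add_apply, Pi.smul_apply, smul_eq_mul]
    rw [this]
    have := hεle i
    ring_nf
    nlinarith [hεle i]
  have hfin := le_specRad_of_subinvariant hn M hM z hzpos (ρ + ε) (by linarith) hsub2
  rw [← hρ] at hfin
  linarith
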